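/- Grouping a relation by character: let (𝛆_i;𝔰_i), i = 1,…,m, be pairwise distinct positive arrays with 𝔰_i ∈ S_w for a fixed weight w, and let a_i ∈ K_N satisfy Σ_{i=1}^m a_i·μ(𝛆_i)·Li(𝛆_i;𝔰_i) = 0 in 𝔽̄_q((1/θ)). Then for every ε ∈ Γ_N one has Σ_{i : χ(𝛆_i)^R = ε^R} a_i·μ(𝛆_i)·Li(𝛆_i;𝔰_i) = 0. -/

import Mathlib

noncomputable section

open scoped Classical

namespace ZHPC

variable (Fq : Type) [Field Fq] [Fintype Fq]

/-- `q`, the cardinality of the base finite field `𝔽_q`. -/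
def qc : ℕ := Fintype.card Fq

/-- A fixed algebraic closure `𝔽̄_q` of `𝔽_q`. -/
abbrev Fb := AlgebraicClosure Fq

/-- The field `𝔽̄_q((1/θ))` of formal Laurent series in `1/θ` over `𝔽̄_q`, modeled as the
field of formal Laurent series in one variable, `θ` being the inverse of that variable. -/
abbrev Kinf := LaurentSeries (Fb Fq)

/-- The embedding of the constants `𝔽̄_q → 𝔽̄_q((1/θ))`. -/
def cst : Fb Fq →+* Kinf Fq := HahnSeries.C

/-- The element `θ`. -/
def theta : Kinf Fq := HahnSeries.single (-1 : ℤ) 1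

/-- `ℓ_d = ∏_{i=1}^{d} (θ - θ^{q^i})`, with `ℓ_0 = 1`. -/
def ell (d : ℕ) : Kinf Fq := ∏ i ∈ Finset.Icc 1 d, (theta Fq - theta Fq ^ qc Fq ^ i)

/-- Arrays `(𝛆;𝔰)` of some depth `n`. -/
structure PArr (F : Type) where
  depth : ℕ
  s : Fin depth → ℕ
  eps : Fin depth → F

namespace PArr

variable {F : Type}

/-- A *positive array* for level `N`: all entries `sᵢ` are positive integers and all the
characters `εᵢ` are `N`-th roots of unity. -/
def Positive [Monoid F] (N : ℕ) (A : PArr F) : Prop := (∀ i, 0 < A.s i) ∧ ∀ i, A.eps i ^ N = 1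

/-- The weight `w(𝔰) = s₁ + ⋯ + s_n`. -/
def wt (A : PArr F) : ℕ := ∑ i, A.s i

/-- The `i`-th entry of `𝔰` (`0`-indexed), with value `0` beyond the depth. -/
def sAt (A : PArr F) (i : ℕ) : ℕ := if h : i < A.depth then A.s ⟨i, h⟩ else 0

/-- The partial sums `s₁ + ⋯ + s_i` (entries beyond the depth being `0`). -/
def psum (A : PArr F) (i : ℕ) : ℕ := ∑ j ∈ Finset.range i, A.sAt j

/-- The character `χ(𝛆) = ε₁ ⋯ ε_n`. -/
def chi [CommMonoid F] (A : PArr F) : F := ∏ i, A.eps i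

end PArr

/-- The Carlitz multiple polylogarithm at roots of unity
`Li(𝛆;𝔰) = Σ_{d₁ > ⋯ > d_n ≥ 0} ε₁^{d₁}⋯ε_n^{d_n} / (ℓ_{d₁}^{s₁}⋯ℓ_{d_n}^{s_n})`. -/
def Li (A : PArr (Fb Fq)) : Kinf Fq :=
  ∑' d : {f : Fin A.depth → ℕ // StrictAnti f},
    ∏ i, cst Fq (A.eps i ^ d.1 i) / ell Fq (d.1 i) ^ A.s i

/-- `Si_d(𝛆;𝔰)`: same summand as `Li`, over decreasing tuples with `d₁ = d`. -/
def Sid (d : ℤ) (A : PArr (Fb Fq)) : Kinf Fq :=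
  ∑' f : {f : Fin A.depth → ℕ // StrictAnti f ∧ ∀ i : Fin A.depth, i.val = 0 → (f i : ℤ) = d},
    ∏ i, cst Fq (A.eps i ^ f.1 i) / ell Fq (f.1 i) ^ A.s i

/-- `Si_{<d}(𝛆;𝔰)`: same summand as `Li`, over decreasing tuples with `d > d₁`. -/
def SidLt (d : ℤ) (A : PArr (Fb Fq)) : Kinf Fq :=
  ∑' f : {f : Fin A.depth → ℕ // StrictAnti f ∧ ∀ i : Fin A.depth, (f i : ℤ) < d},
    ∏ i, cst Fq (A.eps i ^ f.1 i) / ell Fq (f.1 i) ^ A.s i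

/-- The value at `θ` of the monic polynomial `θ^e + Σ_{j<e} c_j θ^j ∈ A = 𝔽_q[θ]`. -/
def monicVal (e : ℕ) (c : Fin e → Fq) : Kinf Fq :=
  theta Fq ^ e + ∑ j, cst Fq (algebraMap Fq (Fb Fq) (c j)) * theta Fq ^ (j : ℕ)

/-- The power sum `S_d(𝛆;𝔰)`, a sum over tuples of monic polynomials `a₁, …, a_n ∈ A₊`
with `d = deg a₁ > ⋯ > deg a_n ≥ 0`; a monic polynomial of degree `e` is encoded by its
tuple of lower coefficients `c : Fin e → Fq`. -/
def Sd (d : ℤ) (A : PArr (Fb Fq)) : Kinf Fq :=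
  ∑' e : {f : Fin A.depth → ℕ // StrictAnti f ∧ ∀ i : Fin A.depth, i.val = 0 → (f i : ℤ) = d},
    ∑ c : (∀ i, Fin (e.1 i) → Fq),
      ∏ i, cst Fq (A.eps i ^ e.1 i) / monicVal Fq (e.1 i) (c i) ^ A.s i

/-- The `N`-th cyclotomic multiple zeta value `ζ_A(𝛆;𝔰) = Σ_{d ≥ 0} S_d(𝛆;𝔰)`. -/
def zetaA (A : PArr (Fb Fq)) : Kinf Fq := ∑' d : ℕ, Sd Fq (d : ℤ) A

/-- The cyclotomic field `k_N = 𝔽_q(ζ_N) ⊆ 𝔽̄_q`. -/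
def kN (N : ℕ) : Subfield (Fb Fq) :=
  Subfield.closure (Set.range (algebraMap Fq (Fb Fq)) ∪ {x | x ^ N = 1})

/-- The field `K_N = k_N(θ)`, as a subfield of `𝔽̄_q((1/θ))`. -/
def KNf (N : ℕ) : Subfield (Kinf Fq) :=
  Subfield.closure ((cst Fq '' (kN Fq N : Set (Fb Fq))) ∪ {theta Fq})

/-- The ring `A_N = k_N[θ]`, as a subring of `𝔽̄_q((1/θ))`. -/
def AN (N : ℕ) : Subring (Kinf Fq) :=
  Subring.closure ((cst Fq '' (kN Fq N : Set (Fb Fq))) ∪ {theta Fq})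

/-- `CZ_{N,w}`: the `K_N`-span of the `N`-th cyclotomic multiple zeta values of weight `w`. -/
def CZ (N w : ℕ) : Submodule (KNf Fq N) (Kinf Fq) :=
  Submodule.span (KNf Fq N) {x | ∃ A : PArr (Fb Fq), A.Positive N ∧ A.wt = w ∧ x = zetaA Fq A}

/-- `CL_{N,w}`: the `K_N`-span of the CMPL's at `N`-th roots of unity of weight `w`. -/
def CL (N w : ℕ) : Submodule (KNf Fq N) (Kinf Fq) :=
  Submodule.span (KNf Fq N) {x | ∃ A : PArr (Fb Fq), A.Positive N ∧ A.wt = w ∧ x = Li Fq A}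

/-- The index set of pairs `(𝔰,𝛆)` with `𝔰 ∈ S_w` and `𝛆 ∈ Γ_N^{depth 𝔰}`: positive arrays
of weight `w` with `q ∤ sᵢ` for all `i`. -/
def SwIdx (N w : ℕ) : Type :=
  {A : PArr (Fb Fq) // A.Positive N ∧ 0 < A.depth ∧ A.wt = w ∧ ∀ i, ¬ qc Fq ∣ A.s i}

/-- `R = [k_N : 𝔽_q]`: the least `r ≥ 1` such that all `N`-th roots of unity lie in
`𝔽_{q^r}` (the fixed field of the `r`-th iterate of the `q`-Frobenius). -/
def Rdeg (N : ℕ) : ℕ := sInf {r | 0 < r ∧ ∀ x : Fb Fq, x ^ N = 1 → x ^ qc Fq ^ r = x}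

set_option synthInstance.maxHeartbeats 1000000

section SameCharAux

variable (Fq : Type) [Field Fq] [Fintype Fq]

lemma charP_Fb : CharP (Fb Fq) (ringChar Fq) :=
  charP_of_injective_algebraMap (algebraMap Fq (Fb Fq)).injective _

lemma ringChar_prime : (ringChar Fq).Prime :=
  (FiniteField.card Fq (ringChar Fq)).choose_spec.1

lemma card_eq : qc Fq = ringChar Fq ^ ((FiniteField.card Fq (ringChar Fq)).choose : ℕ) :=
  (FiniteField.card Fq (ringChar Fq)).choose_spec.2

/-- The `q^r`-power Frobenius on `𝔽̄_q`. -/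
noncomputable def phiQ (r : ℕ) : Fb Fq →+* Fb Fq :=
  haveI := charP_Fb Fq
  haveI : Fact (ringChar Fq).Prime := ⟨ringChar_prime Fq⟩
  iterateFrobenius (Fb Fq) (ringChar Fq) (((FiniteField.card Fq (ringChar Fq)).choose : ℕ) * r)

lemma phiQ_apply (r : ℕ) (x : Fb Fq) : phiQ Fq r x = x ^ qc Fq ^ r := by
  haveI := charP_Fb Fq
  haveI : Fact (ringChar Fq).Prime := ⟨ringChar_prime Fq⟩
  show iterateFrobenius (Fb Fq) (ringChar Fq)
      (((FiniteField.card Fq (ringChar Fq)).choose : ℕ) * r) x = x ^ qc Fq ^ r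
  rw [iterateFrobenius_def, card_eq Fq, ← pow_mul]

lemma phiQ_algebraMap (r : ℕ) (c : Fq) :
    phiQ Fq r (algebraMap Fq (Fb Fq) c) = algebraMap Fq (Fb Fq) c := by
  rw [phiQ_apply, ← map_pow]
  congr 1
  unfold qc
  exact FiniteField.pow_card_pow r c

lemma exists_fix (N : ℕ) (hN : 0 < N) :
    ∃ r : ℕ, 0 < r ∧ ∀ x : Fb Fq, x ^ N = 1 → x ^ qc Fq ^ r = x := by
  classical
  have hfin : {x : Fb Fq | x ^ N = 1}.Finite := by
    have h0 : (Polynomial.X ^ N - Polynomial.C 1 : Polynomial (Fb Fq)) ≠ 0 :=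
      Polynomial.X_pow_sub_C_ne_zero hN 1
    refine (Polynomial.finite_setOf_isRoot h0).subset ?_
    intro x hx
    simp only [Set.mem_setOf_eq] at hx ⊢
    simp [Polynomial.IsRoot, hx, sub_eq_zero]
  haveI := hfin.to_subtype
  set S := {x : Fb Fq | x ^ N = 1} with hS
  have hmem : ∀ x : S, (x : Fb Fq) ^ N = 1 := fun x => x.2
  let f : S → S := fun x => ⟨(x : Fb Fq) ^ qc Fq, by
      simp only [hS, Set.mem_setOf_eq]
      rw [← pow_mul, mul_comm, pow_mul, hmem x, one_pow]⟩
  have hinj : Function.Injective f := by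
    intro x y hxy
    have h1 : phiQ Fq 1 (x : Fb Fq) = phiQ Fq 1 (y : Fb Fq) := by
      rw [phiQ_apply, phiQ_apply, pow_one]
      exact congrArg Subtype.val hxy
    exact Subtype.ext ((phiQ Fq 1).injective h1)
  let e : Equiv.Perm S := Equiv.ofBijective f (Finite.injective_iff_bijective.mp hinj)
  have he : ∀ x : S, ((e x : S) : Fb Fq) = (x : Fb Fq) ^ qc Fq := fun x => rfl
  have hpow : ∀ (k : ℕ) (x : S), ((e ^ k) x : S) = ((x : Fb Fq) ^ qc Fq ^ k : Fb Fq) := by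
    intro k
    induction k with
    | zero => intro x; simp
    | succ k ih =>
      intro x
      rw [pow_succ, Equiv.Perm.mul_apply, ih (e x), he x, ← pow_mul, ← pow_succ']
  refine ⟨orderOf e, orderOf_pos e, fun x hx => ?_⟩
  have h2 := hpow (orderOf e) ⟨x, hx⟩
  rw [pow_orderOf_eq_one] at h2
  have h3 : (((1 : Equiv.Perm S) ⟨x, hx⟩ : S) : Fb Fq) = x := rfl
  rw [h3] at h2
  exact h2.symm

lemma Rdeg_spec (N : ℕ) (hN : 0 < N) :
    0 < Rdeg Fq N ∧ ∀ x : Fb Fq, x ^ N = 1 → x ^ qc Fq ^ Rdeg Fq N = x :=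
  Nat.sInf_mem (exists_fix Fq N hN)

lemma phiQ_root (N : ℕ) (hN : 0 < N) {x : Fb Fq} (hx : x ^ N = 1) :
    phiQ Fq (Rdeg Fq N) x = x := by
  rw [phiQ_apply]
  exact (Rdeg_spec Fq N hN).2 x hx

/-- The coefficientwise `q^R`-power Frobenius on `𝔽̄_q((1/θ))`. -/
noncomputable def sigma' (N : ℕ) : Kinf Fq →+* Kinf Fq where
  toFun x := x.map (phiQ Fq (Rdeg Fq N))
  map_one' := HahnSeries.map_one (phiQ Fq (Rdeg Fq N)).toMonoidWithZeroHom
  map_mul' x y := HahnSeries.map_mul ((phiQ Fq (Rdeg Fq N)) : Fb Fq →ₙ+* Fb Fq)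
  map_zero' := by
    ext g
    simp [HahnSeries.map_coeff]
  map_add' x y := HahnSeries.map_add ((phiQ Fq (Rdeg Fq N)) : Fb Fq →+ Fb Fq)

lemma sigma'_coeff (N : ℕ) (x : Kinf Fq) (g : ℤ) :
    (sigma' Fq N x).coeff g = phiQ Fq (Rdeg Fq N) (x.coeff g) := rfl

lemma sigma'_cst (N : ℕ) (y : Fb Fq) :
    sigma' Fq N (cst Fq y) = cst Fq (phiQ Fq (Rdeg Fq N) y) := by
  ext g
  rw [sigma'_coeff]
  simp only [cst, HahnSeries.C_apply, HahnSeries.coeff_single]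
  split_ifs <;> simp

lemma sigma'_theta (N : ℕ) : sigma' Fq N (theta Fq) = theta Fq := by
  ext g
  rw [sigma'_coeff]
  simp only [theta, HahnSeries.coeff_single]
  split_ifs <;> simp

lemma sigma'_ell (N : ℕ) (d : ℕ) : sigma' Fq N (ell Fq d) = ell Fq d := by
  unfold ell
  rw [map_prod]
  refine Finset.prod_congr rfl fun i _ => ?_
  rw [map_sub, map_pow, sigma'_theta]

lemma sigma'_val_le (N : ℕ) (x : Kinf Fq) :
    Valued.v (sigma' Fq N x) ≤ Valued.v x := by
  by_cases hx : x = 0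
  · simp [hx]
  · have h0 : Valued.v x ≠ 0 := (Valuation.ne_zero_iff _).mpr hx
    obtain ⟨m, hm⟩ := WithZero.ne_zero_iff_exists.mp h0
    have hvx : Valued.v x = ↑(Multiplicative.ofAdd (-(-(Multiplicative.toAdd m)))) := by
      rw [neg_neg, ofAdd_toAdd, hm]
    have hcoeff : ∀ n : ℤ, n < -(Multiplicative.toAdd m) → x.coeff n = 0 :=
      (LaurentSeries.valuation_le_iff_coeff_lt_eq_zero (K := Fb Fq)).mp (le_of_eq hvx)
    have hcoeff' : ∀ n : ℤ, n < -(Multiplicative.toAdd m) → (sigma' Fq N x).coeff n = 0 := by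
      intro n hn
      rw [sigma'_coeff, hcoeff n hn, map_zero]
    calc Valued.v (sigma' Fq N x)
        ≤ ↑(Multiplicative.ofAdd (-(-(Multiplicative.toAdd m)))) :=
          (LaurentSeries.valuation_le_iff_coeff_lt_eq_zero (K := Fb Fq)).mpr hcoeff'
      _ = Valued.v x := hvx.symm

lemma sigma'_continuous (N : ℕ) : Continuous (sigma' Fq N) := by
  apply continuous_of_continuousAt_zero (sigma' Fq N)
  have hb := Valued.hasBasis_nhds_zero (Kinf Fq) (WithZero (Multiplicative ℤ))
  rw [ContinuousAt, map_zero, hb.tendsto_iff hb]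
  intro γ _
  exact ⟨γ, trivial, fun x hx => lt_of_le_of_lt ((Valuation.restrict_le_iff _).mpr (sigma'_val_le Fq N x)) hx⟩

lemma sigma'_tsum_fix (N : ℕ) {ι : Type} (f : ι → Kinf Fq)
    (hf : ∀ i, sigma' Fq N (f i) = f i) :
    sigma' Fq N (∑' i, f i) = ∑' i, f i := by
  by_cases h : Summable f
  · have h2 := (h.hasSum.map (sigma' Fq N) (sigma'_continuous Fq N)).tsum_eq
    rw [← h2]
    exact tsum_congr fun i => hf i
  · rw [tsum_eq_zero_of_not_summable h, map_zero]

lemma sigma'_Li (N : ℕ) (hN : 0 < N) (A : PArr (Fb Fq)) (hroots : ∀ i, A.eps i ^ N = 1) :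
    sigma' Fq N (Li Fq A) = Li Fq A := by
  unfold Li
  apply sigma'_tsum_fix
  intro d
  rw [map_prod]
  refine Finset.prod_congr rfl fun i _ => ?_
  rw [map_div₀, sigma'_cst, map_pow (phiQ Fq (Rdeg Fq N)), phiQ_root Fq N hN (hroots i),
    map_pow (sigma' Fq N), sigma'_ell]

lemma phiQ_fix_kN (N : ℕ) (hN : 0 < N) {x : Fb Fq} (hx : x ∈ kN Fq N) :
    phiQ Fq (Rdeg Fq N) x = x := by
  unfold kN at hx
  induction hx using Subfield.closure_induction with
  | mem y hy =>
    rcases hy with ⟨c, rfl⟩ | hy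
    · exact phiQ_algebraMap Fq _ c
    · exact phiQ_root Fq N hN hy
  | one => exact map_one _
  | add u v _ _ hu hv => rw [map_add, hu, hv]
  | neg u _ hu => rw [map_neg, hu]
  | inv u _ hu => rw [map_inv₀, hu]
  | mul u v _ _ hu hv => rw [map_mul, hu, hv]

lemma sigma'_fix_KNf (N : ℕ) (hN : 0 < N) {x : Kinf Fq} (hx : x ∈ KNf Fq N) :
    sigma' Fq N x = x := by
  unfold KNf at hx
  induction hx using Subfield.closure_induction with
  | mem y hy =>
    rcases hy with ⟨z, hz, rfl⟩ | hy
    · rw [sigma'_cst, phiQ_fix_kN Fq N hN hz]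
    · rw [Set.mem_singleton_iff] at hy
      subst hy
      exact sigma'_theta Fq N
  | one => exact map_one _
  | add u v _ _ hu hv => rw [map_add, hu, hv]
  | neg u _ hu => rw [map_neg, hu]
  | inv u _ hu => rw [map_inv₀, hu]
  | mul u v _ _ hu hv => rw [map_mul, hu, hv]

end SameCharAux


/-- **Grouping a relation by character** (Lemma `same character`): if pairwise distinct
positive arrays `(𝛆_i;𝔰_i)` with `𝔰_i ∈ S_w` and coefficients `a_i ∈ K_N` satisfy
`Σ_i a_i·μ(𝛆_i)·Li(𝛆_i;𝔰_i) = 0`, then for every `ε ∈ Γ_N` the subsum over the indices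
`i` with `χ(𝛆_i)^R = ε^R` also vanishes. -/
theorem grouping_relation_by_character
    (Fq : Type) [Field Fq] [Fintype Fq] (N w : ℕ) (hN : 0 < N) (hw : 0 < w)
    (μ : Fb Fq → Fb Fq)
    (hμ : ∀ x : Fb Fq, x ^ N = 1 → μ x ^ (qc Fq ^ Rdeg Fq N - 1) = x ^ Rdeg Fq N)
    (m : ℕ) (A : Fin m → PArr (Fb Fq))
    (hpos : ∀ i, (A i).Positive N)
    (hSw : ∀ i, 0 < (A i).depth ∧ (A i).wt = w ∧ ∀ j, ¬ qc Fq ∣ (A i).s j)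
    (hinj : Function.Injective A)
    (a : Fin m → Kinf Fq) (ha : ∀ i, a i ∈ KNf Fq N)
    (hrel : ∑ i, a i * cst Fq (∏ j, μ ((A i).eps j)) * Li Fq (A i) = 0) :
    ∀ ε : Fb Fq, ε ^ N = 1 →
      ∑ i ∈ Finset.univ.filter
          (fun i => ((A i).chi) ^ Rdeg Fq N = ε ^ Rdeg Fq N),
        a i * cst Fq (∏ j, μ ((A i).eps j)) * Li Fq (A i) = 0 := by
  classical
  intro ε hε
  have hq1 : 1 ≤ qc Fq ^ Rdeg Fq N := Nat.one_le_pow _ _ Fintype.card_pos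
  have hchiN : ∀ i, (A i).chi ^ N = 1 := by
    intro i
    unfold PArr.chi
    rw [← Finset.prod_pow]
    exact Finset.prod_eq_one fun j _ => (hpos i).2 j
  -- σ applied to each summand multiplies it by `cst (χᵢ^R)`
  have hσx : ∀ i, sigma' Fq N (a i * cst Fq (∏ j, μ ((A i).eps j)) * Li Fq (A i))
      = cst Fq ((A i).chi ^ Rdeg Fq N) *
        (a i * cst Fq (∏ j, μ ((A i).eps j)) * Li Fq (A i)) := by
    intro i
    have h1 : sigma' Fq N (a i) = a i := sigma'_fix_KNf Fq N hN (ha i)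
    have h2 : sigma' Fq N (cst Fq (∏ j, μ ((A i).eps j)))
        = cst Fq ((A i).chi ^ Rdeg Fq N) * cst Fq (∏ j, μ ((A i).eps j)) := by
      rw [sigma'_cst, map_prod]
      have hterm : ∀ j, phiQ Fq (Rdeg Fq N) (μ ((A i).eps j))
          = μ ((A i).eps j) * (A i).eps j ^ Rdeg Fq N := by
        intro j
        rw [phiQ_apply]
        calc μ ((A i).eps j) ^ qc Fq ^ Rdeg Fq N
            = μ ((A i).eps j) ^ (1 + (qc Fq ^ Rdeg Fq N - 1)) := by
              rw [Nat.add_sub_cancel' hq1]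
          _ = μ ((A i).eps j) * (A i).eps j ^ Rdeg Fq N := by
              rw [pow_add, pow_one, hμ _ ((hpos i).2 j)]
      rw [Finset.prod_congr rfl fun j _ => hterm j, Finset.prod_mul_distrib,
        Finset.prod_pow, ← map_mul, mul_comm]
      rfl
    have h3 : sigma' Fq N (Li Fq (A i)) = Li Fq (A i) :=
      sigma'_Li Fq N hN (A i) (hpos i).2
    rw [map_mul, map_mul, h1, h2, h3]
    ring
  -- the twisted relations
  have key : ∀ k : ℕ, ∑ i, cst Fq ((A i).chi ^ Rdeg Fq N) ^ k *
      (a i * cst Fq (∏ j, μ ((A i).eps j)) * Li Fq (A i)) = 0 := by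
    intro k
    induction k with
    | zero => simpa using hrel
    | succ k ih =>
      have h0 := congrArg (sigma' Fq N) ih
      rw [map_sum, map_zero] at h0
      calc ∑ i, cst Fq ((A i).chi ^ Rdeg Fq N) ^ (k + 1) *
            (a i * cst Fq (∏ j, μ ((A i).eps j)) * Li Fq (A i))
          = ∑ i, sigma' Fq N (cst Fq ((A i).chi ^ Rdeg Fq N) ^ k *
            (a i * cst Fq (∏ j, μ ((A i).eps j)) * Li Fq (A i))) := by
            refine Finset.sum_congr rfl fun i _ => ?_
            have hfix : phiQ Fq (Rdeg Fq N) ((A i).chi ^ Rdeg Fq N)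
                = (A i).chi ^ Rdeg Fq N := by
              rw [map_pow, phiQ_root Fq N hN (hchiN i)]
            rw [map_mul, map_pow (sigma' Fq N), sigma'_cst, hfix, hσx i]
            ring
        _ = 0 := h0
  -- Lagrange interpolation step
  by_cases hfe : (Finset.univ.filter
      (fun i => ((A i).chi) ^ Rdeg Fq N = ε ^ Rdeg Fq N)).Nonempty
  · obtain ⟨i₀, hi₀⟩ := hfe
    have hi₀' : (A i₀).chi ^ Rdeg Fq N = ε ^ Rdeg Fq N := (Finset.mem_filter.mp hi₀).2
    set V : Finset (Fb Fq) := Finset.image (fun i => (A i).chi ^ Rdeg Fq N) Finset.univ with hV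
    have hεV : ε ^ Rdeg Fq N ∈ V := Finset.mem_image.mpr ⟨i₀, Finset.mem_univ _, hi₀'⟩
    set P : Polynomial (Fb Fq) := Lagrange.basis V id (ε ^ Rdeg Fq N) with hP
    have hPself : P.eval (ε ^ Rdeg Fq N) = 1 := by
      have := Lagrange.eval_basis_self (s := V) (v := id) (Set.injOn_id _)
        (i := ε ^ Rdeg Fq N) hεV
      simpa using this
    have hPother : ∀ y ∈ V, y ≠ ε ^ Rdeg Fq N → P.eval y = 0 := by
      intro y hy hne
      have := Lagrange.eval_basis_of_ne (s := V) (v := id)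
        (i := ε ^ Rdeg Fq N) (j := y) (fun h => hne h.symm) hy
      simpa using this
    have hsplit : ∑ i, cst Fq (P.eval ((A i).chi ^ Rdeg Fq N)) *
        (a i * cst Fq (∏ j, μ ((A i).eps j)) * Li Fq (A i))
        = ∑ i ∈ Finset.univ.filter
            (fun i => ((A i).chi) ^ Rdeg Fq N = ε ^ Rdeg Fq N),
          a i * cst Fq (∏ j, μ ((A i).eps j)) * Li Fq (A i) := by
      rw [← Finset.sum_filter_add_sum_filter_not Finset.univ
        (fun i => ((A i).chi) ^ Rdeg Fq N = ε ^ Rdeg Fq N)]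
      have h1 : ∑ i ∈ Finset.univ.filter
          (fun i => ((A i).chi) ^ Rdeg Fq N = ε ^ Rdeg Fq N),
          cst Fq (P.eval ((A i).chi ^ Rdeg Fq N)) *
            (a i * cst Fq (∏ j, μ ((A i).eps j)) * Li Fq (A i))
          = ∑ i ∈ Finset.univ.filter
            (fun i => ((A i).chi) ^ Rdeg Fq N = ε ^ Rdeg Fq N),
            a i * cst Fq (∏ j, μ ((A i).eps j)) * Li Fq (A i) := by
        refine Finset.sum_congr rfl fun i hi => ?_
        rw [(Finset.mem_filter.mp hi).2, hPself, map_one, one_mul]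
      have h2 : ∑ i ∈ Finset.univ.filter
          (fun i => ¬ ((A i).chi) ^ Rdeg Fq N = ε ^ Rdeg Fq N),
          cst Fq (P.eval ((A i).chi ^ Rdeg Fq N)) *
            (a i * cst Fq (∏ j, μ ((A i).eps j)) * Li Fq (A i)) = 0 := by
        refine Finset.sum_eq_zero fun i hi => ?_
        have hiV : (A i).chi ^ Rdeg Fq N ∈ V :=
          Finset.mem_image.mpr ⟨i, Finset.mem_univ _, rfl⟩
        rw [hPother _ hiV (Finset.mem_filter.mp hi).2, map_zero, zero_mul]
      rw [h1, h2, add_zero]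
    have hzero : ∑ i, cst Fq (P.eval ((A i).chi ^ Rdeg Fq N)) *
        (a i * cst Fq (∏ j, μ ((A i).eps j)) * Li Fq (A i)) = 0 := by
      have heval : ∀ i, cst Fq (P.eval ((A i).chi ^ Rdeg Fq N))
          = ∑ k ∈ Finset.range (P.natDegree + 1),
            cst Fq (P.coeff k) * cst Fq ((A i).chi ^ Rdeg Fq N) ^ k := by
        intro i
        rw [Polynomial.eval_eq_sum_range, map_sum]
        exact Finset.sum_congr rfl fun k _ => by rw [map_mul, map_pow]
      calc ∑ i, cst Fq (P.eval ((A i).chi ^ Rdeg Fq N)) *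
            (a i * cst Fq (∏ j, μ ((A i).eps j)) * Li Fq (A i))
          = ∑ i, ∑ k ∈ Finset.range (P.natDegree + 1),
            cst Fq (P.coeff k) * (cst Fq ((A i).chi ^ Rdeg Fq N) ^ k *
              (a i * cst Fq (∏ j, μ ((A i).eps j)) * Li Fq (A i))) := by
            refine Finset.sum_congr rfl fun i _ => ?_
            rw [heval i, Finset.sum_mul]
            exact Finset.sum_congr rfl fun k _ => by ring
        _ = ∑ k ∈ Finset.range (P.natDegree + 1), cst Fq (P.coeff k) *
            ∑ i, cst Fq ((A i).chi ^ Rdeg Fq N) ^ k *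
              (a i * cst Fq (∏ j, μ ((A i).eps j)) * Li Fq (A i)) := by
            rw [Finset.sum_comm]
            exact Finset.sum_congr rfl fun k _ => by rw [Finset.mul_sum]
        _ = 0 := by
            refine Finset.sum_eq_zero fun k _ => ?_
            rw [key k, mul_zero]
    exact hsplit.symm.trans hzero
  · rw [Finset.not_nonempty_iff_eq_empty] at hfe
    rw [hfe, Finset.sum_empty]

end ZHPC
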